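/- Let A = φ_{W1}⋯φ_{Wn} be admissible with ⟨κ_A⟩_ℓ = 1. Then the decompositions W_{ℓ-1} = W′_{ℓ-1}W″_{ℓ-1} and W_{ℓ+1} = W′_{ℓ+1}W″_{ℓ+1} with W″_{ℓ-1}W_ℓW′_{ℓ+1} ∈ R are unique. -/

import Mathlib

/-- `P` is a piece for the presentation with defining words `R`: it occurs as a
subword of defining words in two essentially different ways. -/
def IsPiece {X : Type*} (R : Set (List X)) (P : List X) : Prop :=
  ∃ W₁ ∈ R, ∃ W₂ ∈ R, ∃ U₁ U₂ V₁ V₂ : List X,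
    W₁ = U₁ ++ P ++ U₂ ∧ W₂ = V₁ ++ P ++ V₂ ∧ (U₁ ≠ V₁ ∨ U₂ ≠ V₂)

/-- The piece-length `lp W`: the minimal number `k` such that `W` decomposes as a
concatenation of `k` pieces; `0` for the empty word, `⊤` if no decomposition exists. -/
noncomputable def pieceLength {X : Type*} (R : Set (List X)) (W : List X) : ℕ∞ :=
  sInf {n : ℕ∞ | ∃ l : List (List X),
    (∀ P ∈ l, IsPiece R P) ∧ l.flatten = W ∧ (l.length : ℕ∞) = n}

/-- The set of defining words of a presentation given by a set of relations. -/
def defWords {X : Type*} (Rel : Set (List X × List X)) : Set (List X) :=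
  {W | ∃ p ∈ Rel, W = p.1 ∨ W = p.2}

/-- The `K₃²` condition: (a) the two sides of each relation start with different
generators and end with different generators; (b) every defining word has
piece-length at least 3; (c) the words of any two distinct defining relations are
pairwise distinct (and the two sides of each relation are distinct). -/
def K32 {X : Type*} (Rel : Set (List X × List X)) : Prop :=
  (∀ p ∈ Rel, p.1.head? ≠ p.2.head? ∧ p.1.getLast? ≠ p.2.getLast?) ∧
  (∀ W ∈ defWords Rel, 3 ≤ pieceLength (defWords Rel) W) ∧
  (∀ p ∈ Rel, p.1 ≠ p.2) ∧
  (∀ p ∈ Rel, ∀ q ∈ Rel, p ≠ q →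
    p.1 ≠ q.1 ∧ p.1 ≠ q.2 ∧ p.2 ≠ q.1 ∧ p.2 ≠ q.2)

/-- The standard padding map `δ_X` on pairs of words. -/
def pad {X : Type*} : List X → List X → List (Option X × Option X)
  | [], [] => []
  | [], y :: ys => (none, some y) :: pad [] ys
  | x :: xs, [] => (some x, none) :: pad xs []
  | x :: xs, y :: ys => (some x, some y) :: pad xs ys
  termination_by a b => a.length + b.length

/-- The relators of the co-presented group of the semigroup presentation `Rel`. -/
def relators {X : Type*} (Rel : Set (List X × List X)) : Set (FreeGroup X) :=
  {g | ∃ p ∈ Rel, g = (p.1.map FreeGroup.of).prod * ((p.2.map FreeGroup.of).prod)⁻¹}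

/-- Evaluation of a positive word in the co-presented group. -/
def toG {X : Type*} (Rel : Set (List X × List X)) (w : List X) :
    PresentedGroup (relators Rel) :=
  (w.map PresentedGroup.of).prod

/-- Equality in the semigroup presented by `Rel`: the congruence on the free monoid
generated by the defining relations. -/
def SGRel {X : Type*} (Rel : Set (List X × List X)) (w u : List X) : Prop :=
  conGen (fun a b : FreeMonoid X => ∃ p ∈ Rel,
      a = FreeMonoid.ofList p.1 ∧ b = FreeMonoid.ofList p.2)
    (FreeMonoid.ofList w) (FreeMonoid.ofList u)

/-- The word metric on the co-presented group with respect to `X ∪ X⁻¹`;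
its restriction to (the image of) the semigroup is the induced metric. -/
noncomputable def gdist {X : Type*} (Rel : Set (List X × List X))
    (g h : PresentedGroup (relators Rel)) : ℕ∞ :=
  sInf {n : ℕ∞ | ∃ l : List (X × Bool),
    (l.map (fun b => if b.2 then (PresentedGroup.of b.1 : PresentedGroup (relators Rel))
      else (PresentedGroup.of b.1)⁻¹)).prod = g⁻¹ * h ∧ (l.length : ℕ∞) = n}

/-- `W` and `U` are `k`-fellow-travellers with respect to the induced metric. -/
noncomputable def KFT {X : Type*} (Rel : Set (List X × List X)) (k : ℕ)
    (W U : List X) : Prop :=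
  ∀ n : ℕ, gdist Rel (toG Rel (W.take n)) (toG Rel (U.take n)) ≤ (k : ℕ∞)

/-- `L` is an automatic structure for the semigroup presented by `Rel`. -/
def IsAutomaticStructure {X : Type*} (Rel : Set (List X × List X))
    (L : Language X) : Prop :=
  L.IsRegular ∧ (∀ u : List X, ∃ w ∈ L, SGRel Rel w u) ∧
  ∀ x : Option X, Language.IsRegular
    {p : List (Option X × Option X) | ∃ W ∈ L, ∃ U ∈ L,
      SGRel Rel (W ++ x.toList) U ∧ p = pad W U}

/-- The semigroup presented by `Rel` is automatic. -/
def IsAutomatic {X : Type*} (Rel : Set (List X × List X)) : Prop :=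
  ∃ L : Language X, IsAutomaticStructure Rel L

/-- `𝓑`: the set of (nonempty) subwords of defining words. -/
def Bset {X : Type*} (Rel : Set (List X × List X)) : Set (List X) :=
  {W | W ≠ [] ∧ ∃ D ∈ defWords Rel, W <:+: D}

/-- A word over the alphabet `Φ = {φ_W : W ∈ 𝓑}`, recorded as its list of blocks. -/
def IsPhiWord {X : Type*} (Rel : Set (List X × List X)) (A : List (List X)) : Prop :=
  ∀ W ∈ A, W ∈ Bset Rel

/-- `A = φ_{W₁}⋯φ_{Wₙ}` is admissible: no product of consecutive blocks lies in `𝓑`. -/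
def Admissible {X : Type*} (Rel : Set (List X × List X)) (A : List (List X)) : Prop :=
  List.Chain' (fun u v => (u ++ v) ∉ Bset Rel) A

/-- The block preceding position `i` (`0`-based), with `W₀ = ε`. -/
def prevBlock {X : Type*} (A : List (List X)) (i : ℕ) : List X :=
  if i = 0 then [] else A.getD (i - 1) []

/-- The `i`-th (0-based) coordinate of the auxiliary vector `κ_A` equals `1`:
there are decompositions `W_{i-1} = q ++ p` and `W_{i+1} = s ++ t` with
`p ++ W_i ++ s` a defining word whose piece-length exceeds that of its complement. -/
def KappaOne {X : Type*} (Rel : Set (List X × List X)) (A : List (List X)) (i : ℕ) : Prop :=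
  ∃ p s q t : List X,
    prevBlock A i = q ++ p ∧ A.getD (i + 1) [] = s ++ t ∧
    (p ++ A.getD i [] ++ s) ∈ defWords Rel ∧
    ∃ C : List X, ((p ++ A.getD i [] ++ s, C) ∈ Rel ∨ (C, p ++ A.getD i [] ++ s) ∈ Rel) ∧
      pieceLength (defWords Rel) C < pieceLength (defWords Rel) (p ++ A.getD i [] ++ s)

/-- `A` is efficient: admissible and `κ_A` is the zero vector. -/
def Efficient {X : Type*} (Rel : Set (List X × List X)) (A : List (List X)) : Prop :=
  Admissible Rel A ∧ ∀ i < A.length, ¬ KappaOne Rel A i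

/-- Condition (†): each defining relation `L = R` satisfies `lp L + lp R ≥ 7`. -/
def Dagger {X : Type*} (Rel : Set (List X × List X)) : Prop :=
  ∀ p ∈ Rel, 7 ≤ pieceLength (defWords Rel) p.1 + pieceLength (defWords Rel) p.2

/-- The Piefer order: `A ≼ B` iff `κ_A = κ_B` or `κ_A` precedes `κ_B` in shortlex. -/
def PieferLe {X : Type*} (Rel : Set (List X × List X)) (A B : List (List X)) : Prop :=
  A.length < B.length ∨ (A.length = B.length ∧
    ((∀ i < B.length, (KappaOne Rel A i ↔ KappaOne Rel B i)) ∨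
      ∃ j < B.length, (∀ i < j, (KappaOne Rel A i ↔ KappaOne Rel B i)) ∧
        ¬ KappaOne Rel A j ∧ KappaOne Rel B j))

/-- `A` is left-greedy: no block extended by the first letter of the next block is in `𝓑`. -/
def LeftGreedy {X : Type*} (Rel : Set (List X × List X)) (A : List (List X)) : Prop :=
  List.Chain' (fun u v => ∀ x ∈ v.head?, (u ++ [x]) ∉ Bset Rel) A

/-- The word metric on the co-presented group with respect to the generating set
`𝓑 ∪ 𝓑⁻¹`; its restriction to the semigroup is the induced metric `d_Φ`. -/
noncomputable def dPhi {X : Type*} (Rel : Set (List X × List X))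
    (g h : PresentedGroup (relators Rel)) : ℕ∞ :=
  sInf {n : ℕ∞ | ∃ l : List (List X × Bool), (∀ b ∈ l, b.1 ∈ Bset Rel) ∧
    (l.map (fun b => if b.2 then toG Rel b.1 else (toG Rel b.1)⁻¹)).prod = g⁻¹ * h ∧
    (l.length : ℕ∞) = n}

section Aux
variable {X : Type*}

private lemma lp_le_length (R : Set (List X)) (l : List (List X))
    (h : ∀ P ∈ l, IsPiece R P) : pieceLength R l.flatten ≤ l.length :=
  sInf_le ⟨l, h, rfl, rfl⟩

/-- Left side word of a marked decomposition is empty or a piece. -/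
private lemma side_left (Rel : Set (List X × List X)) (A : List (List X))
    (hA : IsPhiWord Rel A) (hAdm : Admissible Rel A)
    (i : ℕ) (hin : i < A.length) (p s q : List X)
    (hq : prevBlock A i = q ++ p)
    (hD : (p ++ A.getD i [] ++ s) ∈ defWords Rel) :
    p = [] ∨ IsPiece (defWords Rel) p := by
  by_cases hp : p = []
  · exact Or.inl hp
  right
  -- i ≠ 0 since prevBlock is nonempty
  have hi0 : i ≠ 0 := by
    intro h0
    rw [h0] at hq
    simp [prevBlock] at hq
    exact hp hq.2
  have hi1 : i - 1 < A.length := lt_of_le_of_lt (Nat.sub_le i 1) hin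
  have hprev : prevBlock A i = A.getD (i - 1) [] := by simp [prevBlock, hi0]
  have hmem : A.getD (i - 1) [] ∈ A := by
    rw [List.getD_eq_getElem A [] hi1]; exact List.getElem_mem hi1
  obtain ⟨hne, D'', hD''mem, hinf⟩ := hA _ hmem
  obtain ⟨a, b, hab⟩ := hinf
  rw [hprev] at hq
  rw [hq] at hab
  by_cases haq : a ++ q = []
  · -- then A[i-1] = p and A[i-1] ++ A[i] is a subword of a defining word: contra admissibility
    exfalso
    have ha : a = [] := by simpa using (List.append_eq_nil_iff.mp haq).1
    have hqq : q = [] := by simpa using (List.append_eq_nil_iff.mp haq).2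
    have hchain := List.isChain_iff_getElem.mp hAdm (i - 1)
      (by omega)
    have hget1 : A.get ⟨i - 1, by omega⟩ = A.getD (i - 1) [] :=
      (List.getD_eq_getElem A [] hi1).symm
    have hi1' : i - 1 + 1 = i := by omega
    have hget2 : A.get ⟨i - 1 + 1, by omega⟩ = A.getD i [] := by
      simp only [hi1']
      exact (List.getD_eq_getElem A [] hin).symm
    simp only [List.get_eq_getElem] at hget1 hget2
    rw [hget1, hget2] at hchain
    apply hchain
    refine ⟨hp ∘ ?_, p ++ A.getD i [] ++ s, hD, [], s, ?_⟩
    · intro h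
      rw [hq, hqq] at h
      simp at h
      exact h.1
    · rw [hq, hqq]
      simp
  · -- p occurs with two different contexts: it is a piece
    refine ⟨p ++ A.getD i [] ++ s, hD, D'', hD''mem, [], A.getD i [] ++ s, a ++ q, b,
      by simp, by rw [← hab]; simp, Or.inl (fun h => haq h.symm)⟩

/-- Right side word of a marked decomposition is empty or a piece. -/
private lemma side_right (Rel : Set (List X × List X)) (A : List (List X))
    (hA : IsPhiWord Rel A) (hAdm : Admissible Rel A)
    (i : ℕ) (hin : i < A.length) (p s t : List X)
    (hs : A.getD (i + 1) [] = s ++ t)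
    (hD : (p ++ A.getD i [] ++ s) ∈ defWords Rel) :
    s = [] ∨ IsPiece (defWords Rel) s := by
  by_cases hsn : s = []
  · exact Or.inl hsn
  right
  have hi1 : i + 1 < A.length := by
    by_contra hc
    have : A.getD (i + 1) [] = [] := List.getD_eq_default A [] (by omega)
    rw [hs] at this
    exact hsn (List.append_eq_nil_iff.mp this).1
  have hmem : A.getD (i + 1) [] ∈ A := by
    rw [List.getD_eq_getElem A [] hi1]; exact List.getElem_mem hi1
  obtain ⟨hne, D''', hD'''mem, hinf⟩ := hA _ hmem
  obtain ⟨a, b, hab⟩ := hinf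
  rw [hs] at hab
  by_cases htb : t ++ b = []
  · exfalso
    have ht : t = [] := (List.append_eq_nil_iff.mp htb).1
    have hb : b = [] := (List.append_eq_nil_iff.mp htb).2
    have hWmem : A.getD i [] ∈ A := by
      rw [List.getD_eq_getElem A [] hin]; exact List.getElem_mem hin
    have hWne : A.getD i [] ≠ [] := (hA _ hWmem).1
    have hchain := List.isChain_iff_getElem.mp hAdm i (by omega)
    have hget1 : A.get ⟨i, by omega⟩ = A.getD i [] :=
      (List.getD_eq_getElem A [] hin).symm
    have hget2 : A.get ⟨i + 1, by omega⟩ = A.getD (i + 1) [] :=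
      (List.getD_eq_getElem A [] hi1).symm
    simp only [List.get_eq_getElem] at hget1 hget2
    rw [hget1, hget2] at hchain
    apply hchain
    refine ⟨?_, p ++ A.getD i [] ++ s, hD, p, [], ?_⟩
    · intro h
      exact hWne (List.append_eq_nil_iff.mp h).1
    · rw [hs, ht]
      simp
  · refine ⟨p ++ A.getD i [] ++ s, hD, D''', hD'''mem, p ++ A.getD i [], [], a, t ++ b,
      by simp, by rw [← hab]; simp, Or.inr (fun h => htb h.symm)⟩

/-- The middle block of a marked position is not a piece. -/
private lemma block_not_piece (Rel : Set (List X × List X)) (hDag : Dagger Rel)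
    (A : List (List X)) (hA : IsPhiWord Rel A) (hAdm : Admissible Rel A)
    (i : ℕ) (hin : i < A.length) (hκ : KappaOne Rel A i) :
    ¬ IsPiece (defWords Rel) (A.getD i []) := by
  intro hpW
  obtain ⟨p₀, s₀, q₀, t₀, hq, hs, hDmem, C, hC, hlt⟩ := hκ
  -- the defining word D₀ = p₀ ++ W ++ s₀ has piece length at most 3
  have hp := side_left Rel A hA hAdm i hin p₀ s₀ q₀ hq hDmem
  have hss := side_right Rel A hA hAdm i hin p₀ s₀ t₀ hs hDmem
  set W := A.getD i [] with hW
  set D₀ := p₀ ++ W ++ s₀ with hD₀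
  have h3 : pieceLength (defWords Rel) D₀ ≤ 3 := by
    rcases hp with hp | hp <;> rcases hss with hss | hss
    · have := lp_le_length (defWords Rel) [W] (by simpa using hpW)
      simp only [List.flatten, List.append_nil, List.length] at this
      calc pieceLength (defWords Rel) D₀ = pieceLength (defWords Rel) W := by
            rw [hD₀, hp, hss]; simp
        _ ≤ (1 : ℕ) := by simpa using this
        _ ≤ 3 := by norm_num
    · have := lp_le_length (defWords Rel) [W, s₀] (by simp [hpW, hss])
      simp only [List.flatten, List.append_nil, List.length] at this
      calc pieceLength (defWords Rel) D₀ = pieceLength (defWords Rel) (W ++ s₀) := by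
            rw [hD₀, hp]; simp
        _ ≤ (2 : ℕ) := by simpa using this
        _ ≤ 3 := by norm_num
    · have := lp_le_length (defWords Rel) [p₀, W] (by simp [hpW, hp])
      simp only [List.flatten, List.append_nil, List.length] at this
      calc pieceLength (defWords Rel) D₀ = pieceLength (defWords Rel) (p₀ ++ W) := by
            rw [hD₀, hss]; simp
        _ ≤ (2 : ℕ) := by simpa using this
        _ ≤ 3 := by norm_num
    · have := lp_le_length (defWords Rel) [p₀, W, s₀] (by simp [hpW, hp, hss])
      simp only [List.flatten, List.append_nil, List.length] at this
      calc pieceLength (defWords Rel) D₀ ≤ (3 : ℕ) := by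
            simpa [hD₀] using this
        _ ≤ 3 := by norm_num
  have hC3 : pieceLength (defWords Rel) C ≤ 3 := le_trans hlt.le h3
  have h7 : (7 : ℕ∞) ≤ pieceLength (defWords Rel) D₀ + pieceLength (defWords Rel) C := by
    rcases hC with hC | hC
    · simpa using hDag _ hC
    · have := hDag _ hC
      simpa [add_comm] using this
  have : (7 : ℕ∞) ≤ 6 := le_trans h7 (by
    calc pieceLength (defWords Rel) D₀ + pieceLength (defWords Rel) C ≤ 3 + 3 :=
          add_le_add h3 hC3
      _ = 6 := by norm_num)
  norm_num at this

end Aux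

/-- Uniqueness of the decompositions in the definition of `κ_A`: if `A` is
admissible and `⟨κ_A⟩ᵢ = 1`, then the decompositions `W_{i-1} = q ++ p` and
`W_{i+1} = s ++ t` with `p ++ W_i ++ s` a defining word are unique. -/
theorem marked_decomposition_unique {X : Type*} (Rel : Set (List X × List X))
    (hK : K32 Rel) (hD : Dagger Rel)
    (A : List (List X)) (hA : IsPhiWord Rel A) (hAdm : Admissible Rel A)
    (i : ℕ) (hin : i < A.length) (hκ : KappaOne Rel A i) :
    ∀ p s q t p' s' q' t' : List X,
      prevBlock A i = q ++ p → A.getD (i + 1) [] = s ++ t →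
      (p ++ A.getD i [] ++ s) ∈ defWords Rel →
      prevBlock A i = q' ++ p' → A.getD (i + 1) [] = s' ++ t' →
      (p' ++ A.getD i [] ++ s') ∈ defWords Rel →
      p = p' ∧ s = s' := by
  intro p s q t p' s' q' t' hq hs hmem hq' hs' hmem'
  by_contra h
  exact block_not_piece Rel hD A hA hAdm i hin hκ
    ⟨_, hmem, _, hmem', p, s, p', s', rfl, rfl, not_and_or.mp h⟩
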